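/- Fix x ∈ 𝒳 with q(x) > 0 and suppose f_k(1; x, (1,…,1)) > 0 for every k ∈ {1,…,K}. Then P(X = x, R_{k+1} = 1, …, R_K = 1) > 0 for every k, so each conditional probability P(R_k = 1 | X = x, R_{k+1} = 1, …, R_K = 1) is well defined, and the target law satisfies q(x) = P(X = x, R_1 = 1, …, R_K = 1) / ∏_{k=1}^K P(R_k = 1 | X = x, R_{k+1} = 1, …, R_K = 1). -/
import Mathlib

open Finset

lemma telescope_aux
    (K : ℕ) (X : Fin K → Type)
    (f : Fin K → Bool → (∀ k, X k) → (Fin K → Bool) → ℝ)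
    (hfsum : ∀ k x r, f k false x r + f k true x r = 1)
    (hfdep : ∀ k b x (r r' : Fin K → Bool),
      (∀ i : Fin K, k < i → r i = r' i) → f k b x r = f k b x r')
    (x : ∀ k, X k) (n : ℕ) (hn : n ≤ K) :
    ∀ d m, m + d = n →
      ∑ r ∈ univ.filter
          (fun r : Fin K → Bool => ∀ i : Fin K, (i.val < m ∨ n ≤ i.val) → r i = true),
        ∏ i ∈ univ.filter (fun i : Fin K => m ≤ i.val ∧ i.val < n), f i (r i) x r = 1 := by
  intro d
  induction d with
  | zero =>
    intro m hm
    have hmn : m = n := by omega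
    subst hmn
    have h1 : univ.filter (fun i : Fin K => m ≤ i.val ∧ i.val < m) = (∅ : Finset (Fin K)) := by
      ext i; simp only [mem_filter, mem_univ, true_and, notMem_empty, iff_false]; omega
    have h2 : univ.filter
        (fun r : Fin K → Bool => ∀ i : Fin K, (i.val < m ∨ m ≤ i.val) → r i = true)
        = ({fun _ => true} : Finset (Fin K → Bool)) := by
      ext r
      simp only [mem_filter, mem_univ, true_and, mem_singleton]
      constructor
      · intro h; funext i; exact h i (Nat.lt_or_ge _ _)
      · intro h i _; subst h; rfl
    rw [h1, h2]
    simp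
  | succ d ih =>
    intro m hm
    have hmn : m < n := by omega
    have hmK : m < K := lt_of_lt_of_le hmn hn
    set j : Fin K := ⟨m, hmK⟩ with hjdef
    set F : (Fin K → Bool) → ℝ :=
      fun r => ∏ i ∈ univ.filter (fun i : Fin K => m ≤ i.val ∧ i.val < n), f i (r i) x r
      with hF
    set S' : Finset (Fin K → Bool) := univ.filter
      (fun r : Fin K → Bool => ∀ i : Fin K, (i.val < m + 1 ∨ n ≤ i.val) → r i = true) with hS'
    have hmemS' : ∀ r ∈ S', ∀ i : Fin K, (i.val < m + 1 ∨ n ≤ i.val) → r i = true := by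
      intro r hr; simpa [hS', mem_filter] using hr
    have key : ∑ r ∈ univ.filter
          (fun r : Fin K → Bool => ∀ i : Fin K, (i.val < m ∨ n ≤ i.val) → r i = true), F r
        = ∑ pr ∈ S' ×ˢ (univ : Finset Bool), F (Function.update pr.1 j pr.2) := by
      apply Finset.sum_nbij' (fun r => (Function.update r j true, r j))
        (fun pr => Function.update pr.1 j pr.2)
      · intro r hr
        simp only [mem_filter, mem_univ, true_and] at hr
        simp only [mem_product, mem_univ, and_true, hS', mem_filter, true_and]
        intro i hi
        by_cases h : i = j
        · subst h; simp
        · rw [Function.update_of_ne h]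
          apply hr
          have : i.val ≠ m := fun hc => h (Fin.ext hc)
          omega
      · intro pr hpr
        simp only [mem_product, mem_univ, and_true] at hpr
        simp only [mem_filter, mem_univ, true_and]
        intro i hi
        have : i.val ≠ m := by omega
        rw [Function.update_of_ne (fun hc => this (by rw [hc]))]
        exact hmemS' pr.1 hpr i (by omega)
      · intro r hr
        simp only []
        rw [Function.update_idem, Function.update_eq_self]
      · intro pr hpr
        simp only [mem_product, mem_univ, and_true] at hpr
        have h1 : Function.update pr.1 j pr.2 j = pr.2 := Function.update_self _ _ _
        have h2 : pr.1 j = true := hmemS' pr.1 hpr j (by simp [hjdef])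
        rw [Function.update_idem, h1, ← h2, Function.update_eq_self]
      · intro r hr
        rw [Function.update_idem, Function.update_eq_self]
    rw [key, Finset.sum_product]
    have hins : univ.filter (fun i : Fin K => m ≤ i.val ∧ i.val < n)
        = insert j (univ.filter (fun i : Fin K => m + 1 ≤ i.val ∧ i.val < n)) := by
      ext i
      simp only [mem_filter, mem_univ, true_and, mem_insert]
      constructor
      · rintro ⟨h1, h2⟩
        rcases eq_or_lt_of_le h1 with h | h
        · left; exact Fin.ext h.symm
        · right; exact ⟨h, h2⟩
      · rintro (rfl | ⟨h1, h2⟩)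
        · exact ⟨le_refl _, hmn⟩
        · exact ⟨by omega, h2⟩
    have hjnot : j ∉ univ.filter (fun i : Fin K => m + 1 ≤ i.val ∧ i.val < n) := by
      simp [hjdef]
    have inner : ∀ r ∈ S', (∑ b : Bool, F (Function.update r j b))
        = ∏ i ∈ univ.filter (fun i : Fin K => m + 1 ≤ i.val ∧ i.val < n), f i (r i) x r := by
      intro r hr
      have hFb : ∀ b : Bool, F (Function.update r j b)
          = f j b x r * ∏ i ∈ univ.filter (fun i : Fin K => m + 1 ≤ i.val ∧ i.val < n),
              f i (r i) x r := by
        intro b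
        rw [hF]
        simp only []
        rw [hins, Finset.prod_insert hjnot]
        congr 1
        · rw [Function.update_self]
          apply hfdep
          intro i hi
          apply Function.update_of_ne
          intro hc; subst hc; exact lt_irrefl _ hi
        · apply Finset.prod_congr rfl
          intro i hi
          simp only [mem_filter, mem_univ, true_and] at hi
          have hij : i ≠ j := by
            intro hc; subst hc; simp only [hjdef] at hi; omega
          rw [Function.update_of_ne hij]
          apply hfdep
          intro l hl
          apply Function.update_of_ne
          intro hc; subst hc
          have : (i : ℕ) < (j : ℕ) := hl
          simp only [hjdef] at this; omega
      rw [Fintype.sum_bool, hFb true, hFb false, ← add_mul, add_comm, hfsum, one_mul]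
    rw [Finset.sum_congr rfl inner]
    exact ih (m + 1) (by omega)

open Finset

lemma sumT_aux
    (K : ℕ) (X : Fin K → Type) [∀ k, Fintype (X k)]
    (q : (∀ k, X k) → ℝ)
    (f : Fin K → Bool → (∀ k, X k) → (Fin K → Bool) → ℝ)
    (hfsum : ∀ k x r, f k false x r + f k true x r = 1)
    (hfdep : ∀ k b x (r r' : Fin K → Bool),
      (∀ i : Fin K, k < i → r i = r' i) → f k b x r = f k b x r')
    (p : (∀ k, X k) → (Fin K → Bool) → ℝ)
    (hp : ∀ x r, p x r = q x * ∏ k, f k (r k) x r)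
    (x : ∀ k, X k) (n : ℕ) (hn : n ≤ K) :
    ∑ r ∈ univ.filter (fun r : Fin K → Bool => ∀ i : Fin K, n ≤ i.val → r i = true), p x r
      = q x * ∏ i ∈ univ.filter (fun i : Fin K => n ≤ i.val), f i true x (fun _ => true) := by
  have hsplit : ∀ r ∈ univ.filter
      (fun r : Fin K → Bool => ∀ i : Fin K, n ≤ i.val → r i = true),
      (∏ k, f k (r k) x r)
        = (∏ i ∈ univ.filter (fun i : Fin K => n ≤ i.val), f i true x (fun _ => true))
          * ∏ i ∈ univ.filter (fun i : Fin K => ¬ n ≤ i.val), f i (r i) x r := by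
    intro r hr
    simp only [mem_filter, mem_univ, true_and] at hr
    rw [← Finset.prod_filter_mul_prod_filter_not univ (fun i : Fin K => n ≤ i.val)]
    congr 1
    apply Finset.prod_congr rfl
    intro i hi
    simp only [mem_filter, mem_univ, true_and] at hi
    rw [hr i hi]
    apply hfdep
    intro l hl
    exact hr l (by have := Fin.lt_def.mp hl; omega)
  calc ∑ r ∈ univ.filter (fun r : Fin K → Bool => ∀ i : Fin K, n ≤ i.val → r i = true), p x r
      = ∑ r ∈ univ.filter (fun r : Fin K → Bool => ∀ i : Fin K, n ≤ i.val → r i = true),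
          (q x * ∏ i ∈ univ.filter (fun i : Fin K => n ≤ i.val), f i true x (fun _ => true))
            * ∏ i ∈ univ.filter (fun i : Fin K => ¬ n ≤ i.val), f i (r i) x r := by
        apply Finset.sum_congr rfl
        intro r hr
        rw [hp, hsplit r hr, mul_assoc]
    _ = (q x * ∏ i ∈ univ.filter (fun i : Fin K => n ≤ i.val), f i true x (fun _ => true))
          * ∑ r ∈ univ.filter (fun r : Fin K → Bool => ∀ i : Fin K, n ≤ i.val → r i = true),
              ∏ i ∈ univ.filter (fun i : Fin K => ¬ n ≤ i.val), f i (r i) x r := by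
        rw [Finset.mul_sum]
    _ = q x * ∏ i ∈ univ.filter (fun i : Fin K => n ≤ i.val), f i true x (fun _ => true) := by
        have e1 : univ.filter (fun r : Fin K → Bool => ∀ i : Fin K, n ≤ i.val → r i = true)
            = univ.filter
              (fun r : Fin K → Bool => ∀ i : Fin K, (i.val < 0 ∨ n ≤ i.val) → r i = true) := by
          apply Finset.filter_congr
          intro r _
          constructor
          · intro h i hi; exact h i (by omega)
          · intro h i hi; exact h i (Or.inr hi)
        have e2 : univ.filter (fun i : Fin K => ¬ n ≤ i.val)
            = univ.filter (fun i : Fin K => 0 ≤ i.val ∧ i.val < n) := by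
          apply Finset.filter_congr
          intro i _
          constructor
          · intro h; exact ⟨by omega, by omega⟩
          · intro h; omega
        rw [e1, Finset.sum_congr rfl (fun r _ => by rw [e2]),
          telescope_aux K X f hfsum hfdep x n hn n 0 (by omega), mul_one]

theorem stmt_0
    (K : ℕ) (hK : 0 < K)
    (X : Fin K → Type) [∀ k, Fintype (X k)] [∀ k, Nonempty (X k)]
    (q : (∀ k, X k) → ℝ)
    (hq0 : ∀ x, 0 ≤ q x) (hq1 : ∑ x, q x = 1)
    (f : Fin K → Bool → (∀ k, X k) → (Fin K → Bool) → ℝ)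
    (hf0 : ∀ k b x r, 0 ≤ f k b x r)
    (hfsum : ∀ k x r, f k false x r + f k true x r = 1)
    (hfdep : ∀ k b x (r r' : Fin K → Bool),
      (∀ i : Fin K, k < i → r i = r' i) → f k b x r = f k b x r')
    (p : (∀ k, X k) → (Fin K → Bool) → ℝ)
    (hp : ∀ x r, p x r = q x * ∏ k, f k (r k) x r)
    (x : ∀ k, X k) (hx : 0 < q x)
    (hfx : ∀ k : Fin K, 0 < f k true x (fun _ => true)) :
    (∀ k : Fin K,
      0 < ∑ r ∈ univ.filter (fun r : Fin K → Bool => ∀ i : Fin K, k < i → r i = true), p x r)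
    ∧ q x = p x (fun _ => true) /
        ∏ k : Fin K,
          ((∑ r ∈ univ.filter (fun r : Fin K → Bool => ∀ i : Fin K, k ≤ i → r i = true), p x r)
            / (∑ r ∈ univ.filter (fun r : Fin K → Bool => ∀ i : Fin K, k < i → r i = true),
                p x r)) := by
  set P : ℕ → ℝ :=
    fun n => ∏ i ∈ univ.filter (fun i : Fin K => n ≤ i.val), f i true x (fun _ => true) with hP
  have hPpos : ∀ n, 0 < P n := fun n => Finset.prod_pos (fun i _ => hfx i)
  have hlt : ∀ k : Fin K,
      (∑ r ∈ univ.filter (fun r : Fin K → Bool => ∀ i : Fin K, k < i → r i = true), p x r)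
        = q x * P (k.val + 1) := by
    intro k
    have hfil : univ.filter (fun r : Fin K → Bool => ∀ i : Fin K, k < i → r i = true)
        = univ.filter (fun r : Fin K → Bool => ∀ i : Fin K, k.val + 1 ≤ i.val → r i = true) := by
      apply Finset.filter_congr
      intro r _
      constructor
      · intro h i hi; exact h i (Fin.lt_def.mpr (by omega))
      · intro h i hi; exact h i (by have := Fin.lt_def.mp hi; omega)
    rw [hfil]
    exact sumT_aux K X q f hfsum hfdep p hp x (k.val + 1) k.isLt
  have hle : ∀ k : Fin K,
      (∑ r ∈ univ.filter (fun r : Fin K → Bool => ∀ i : Fin K, k ≤ i → r i = true), p x r)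
        = q x * P k.val := by
    intro k
    have hfil : univ.filter (fun r : Fin K → Bool => ∀ i : Fin K, k ≤ i → r i = true)
        = univ.filter (fun r : Fin K → Bool => ∀ i : Fin K, k.val ≤ i.val → r i = true) := by
      apply Finset.filter_congr
      intro r _
      constructor
      · intro h i hi; exact h i (Fin.le_def.mpr hi)
      · intro h i hi; exact h i (Fin.le_def.mp hi)
    rw [hfil]
    exact sumT_aux K X q f hfsum hfdep p hp x k.val (le_of_lt k.isLt)
  have hPins : ∀ k : Fin K, P k.val = f k true x (fun _ => true) * P (k.val + 1) := by
    intro k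
    rw [hP]
    simp only []
    have hins : univ.filter (fun i : Fin K => k.val ≤ i.val)
        = insert k (univ.filter (fun i : Fin K => k.val + 1 ≤ i.val)) := by
      ext i
      simp only [mem_filter, mem_univ, true_and, mem_insert]
      constructor
      · intro h
        rcases eq_or_lt_of_le h with h | h
        · left; exact Fin.ext h.symm
        · right; omega
      · rintro (rfl | h) <;> omega
    rw [hins, Finset.prod_insert (by simp)]
  have hratio : ∀ k : Fin K,
      (∑ r ∈ univ.filter (fun r : Fin K → Bool => ∀ i : Fin K, k ≤ i → r i = true), p x r)
        / (∑ r ∈ univ.filter (fun r : Fin K → Bool => ∀ i : Fin K, k < i → r i = true), p x r)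
        = f k true x (fun _ => true) := by
    intro k
    rw [hle k, hlt k, hPins k,
      show q x * (f k true x (fun _ => true) * P (k.val + 1))
          = f k true x (fun _ => true) * (q x * P (k.val + 1)) by ring,
      mul_div_assoc, div_self (mul_pos hx (hPpos _)).ne', mul_one]
  constructor
  · intro k
    rw [hlt k]
    exact mul_pos hx (hPpos _)
  · rw [Finset.prod_congr rfl (fun k _ => hratio k), hp]
    have hprod : (∏ k : Fin K, f k ((fun _ : Fin K => true) k) x (fun _ => true))
        = ∏ k : Fin K, f k true x (fun _ => true) := rfl
    rw [hprod, mul_div_assoc, div_self (Finset.prod_pos (fun k _ => hfx k)).ne', mul_one]
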